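/- Let Y be a proximinal closed subspace of a real Banach space X and k ∈ ℕ. If Y is a k-Chebyshev subspace of X (i.e., dim P_Y(x) ≤ k − 1 for all x), then for every y⊥ ∈ S_{Y⊥} and every x ∈ S(X, y⊥), the affine dimension of (S(X, y⊥) − x) ∩ Y is less than k. -/

import Mathlib

open NormedSpace Metric Set

namespace Paper

variable {X : Type*} [NormedAddCommGroup X] [NormedSpace ℝ X]

/-- The restriction of a continuous linear functional to a subspace. -/
noncomputable def restr (Y : Submodule ℝ X) (f : StrongDual ℝ X) : StrongDual ℝ ↥Y :=
  f.comp Y.subtypeL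

/-- The annihilator `Y⊥` of a subspace `Y` in the dual. -/
def ann (Y : Submodule ℝ X) : Set (StrongDual ℝ X) := {f | ∀ y ∈ Y, f y = 0}

/-- The set of norm-preserving (Hahn–Banach) extensions of `g : Y* ` to `X`. -/
def HB (Y : Submodule ℝ X) (g : StrongDual ℝ ↥Y) : Set (StrongDual ℝ X) :=
  {f | (∀ y : Y, f (y : X) = g y) ∧ ‖f‖ = ‖g‖}

/-- Best approximations to `x` from a set `A`. -/
def bestApprox {E : Type*} [NormedAddCommGroup E] (A : Set E) (x : E) : Set E :=
  {z ∈ A | ‖x - z‖ = infDist x A}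

/-- Property-(U): every functional on `Y` has a unique norm-preserving extension to `X`. -/
def propU (Y : Submodule ℝ X) : Prop :=
  ∀ g : StrongDual ℝ ↥Y, ∃! f : StrongDual ℝ X, f ∈ HB Y g

/-- `Y# `: the set of functionals whose norm equals the norm of their restriction to `Y`. -/
def sharp (Y : Submodule ℝ X) : Set (StrongDual ℝ X) := {f | ‖f‖ = ‖restr Y f‖}

/-- Property-(HB), stated via the decomposition `X* = Y# ⊕ Y⊥`. -/
def propHB (Y : Submodule ℝ X) : Prop :=
  (∀ f ∈ sharp Y, ∀ g ∈ sharp Y, f + g ∈ sharp Y) ∧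
  (∀ (c : ℝ), ∀ f ∈ sharp Y, c • f ∈ sharp Y) ∧
  (∀ f : StrongDual ℝ X, ∃ g ∈ sharp Y, ∃ h ∈ ann Y, f = g + h) ∧
  (∀ g ∈ sharp Y, ∀ h ∈ ann Y, h ≠ 0 → ‖g‖ < ‖g + h‖ ∧ ‖h‖ ≤ ‖g + h‖)

end Paper

open Paper

/-- if a proximinal closed subspace `Y` is `k`-Chebyshev in `X`
(`dim P_Y(x) ≤ k−1` for all `x`), then for every `y⊥ ∈ S_{Y⊥}` and every
`x ∈ S(X, y⊥) = {x ∈ S_X : y⊥(x) = ‖y⊥‖}`, the dimension of `(S(X, y⊥) − x) ∩ Y` is less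
than `k`. -/
theorem stmt15 {X : Type*} [NormedAddCommGroup X] [NormedSpace ℝ X] [CompleteSpace X]
    (Y : Submodule ℝ X) (hYc : IsClosed (Y : Set X)) (k : ℕ)
    (prox : ∀ x : X, (bestApprox (Y : Set X) x).Nonempty)
    (hcheb : ∀ x : X, ∀ a ∈ bestApprox (Y : Set X) x,
      Module.rank ℝ ↥(Submodule.span ℝ ((· - a) '' bestApprox (Y : Set X) x)) < (k : Cardinal)) :
    ∀ f : StrongDual ℝ X, f ∈ ann Y → ‖f‖ = 1 →
      ∀ x : X, ‖x‖ = 1 → f x = ‖f‖ →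
        Module.rank ℝ ↥(Submodule.span ℝ
          (((· - x) '' {z : X | ‖z‖ = 1 ∧ f z = ‖f‖}) ∩ (Y : Set X))) < (k : Cardinal) := by
  intro f hf hf1 x hx hfx
  have hY0 : (0 : X) ∈ (Y : Set X) := Y.zero_mem
  have hd : infDist x (Y : Set X) = 1 := by
    apply le_antisymm
    · calc infDist x (Y : Set X) ≤ dist x 0 := infDist_le_dist_of_mem hY0
        _ = 1 := by simp [dist_eq_norm, hx]
    · refine le_of_not_gt fun hlt => ?_
      obtain ⟨y, hy, hdy⟩ := (infDist_lt_iff ⟨0, hY0⟩).mp hlt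
      refine absurd hdy (not_lt.mpr ?_)
      have h1 : f (x - y) = 1 := by rw [map_sub, hf y hy, sub_zero, hfx, hf1]
      have h2 := f.le_opNorm (x - y)
      rw [hf1, one_mul] at h2
      calc (1 : ℝ) = f (x - y) := h1.symm
        _ ≤ ‖f (x - y)‖ := le_abs_self _
        _ ≤ ‖x - y‖ := h2
        _ = dist x y := (dist_eq_norm x y).symm
  have h0 : (0 : X) ∈ bestApprox (Y : Set X) x := ⟨hY0, by simp [hx, hd]⟩
  have key := hcheb x 0 h0
  refine lt_of_le_of_lt (Submodule.rank_mono (Submodule.span_le.mpr ?_)) key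
  rintro a ⟨⟨z, ⟨hz1, hz2⟩, rfl⟩, haY⟩
  have hmem : x - z ∈ bestApprox (Y : Set X) x := by
    constructor
    · have : -(z - x) ∈ Y := Y.neg_mem haY
      simpa [neg_sub] using this
    · have he : x - (x - z) = z := by abel
      rw [he, hz1, hd]
  have himg : x - z ∈ (· - (0 : X)) '' bestApprox (Y : Set X) x :=
    ⟨x - z, hmem, by simp⟩
  have hsp := Submodule.subset_span (R := ℝ) himg
  have hneg : -(x - z) ∈ Submodule.span ℝ ((· - (0 : X)) '' bestApprox (Y : Set X) x) :=
    Submodule.neg_mem _ hsp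
  simpa [neg_sub] using hneg
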